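/- If every bipartite graph admitting a bipartition (A,B) with |A| ≥ |B| > 0 and every vertex of A of degree at least six has a K_6 minor, then every bipartite graph admitting a bipartition (A,B) with |A| ≥ |B| > 0 and every vertex of A of degree at least five has a K_5 minor. -/

import Mathlib

open SimpleGraph Function

/-- `G` has a `K_t` minor: there are `t` nonempty, pairwise disjoint "branch sets",
each inducing a connected subgraph, with an edge of `G` between any two of them.
(This is the "`t`-cluster" formulation, equivalent to `K_t` being obtainable from a
subgraph of `G` by contracting edges.) -/
def HasCliqueMinor {V : Type*} (G : SimpleGraph V) (t : ℕ) : Prop :=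
  ∃ f : Fin t → Set V,
    (∀ i, (f i).Nonempty) ∧
    (∀ i, (G.induce (f i)).Connected) ∧
    (Pairwise fun i j => Disjoint (f i) (f j)) ∧
    ∀ i j, i ≠ j → ∃ u ∈ f i, ∃ v ∈ f j, G.Adj u v

/-- `(A, B)` is a bipartition of `G`: the parts partition the vertex set and
every edge joins `A` to `B`. -/
def IsBipartitionWith {V : Type*} (G : SimpleGraph V) (A B : Set V) : Prop :=
  (∀ v, v ∈ A ∨ v ∈ B) ∧ (∀ v, ¬(v ∈ A ∧ v ∈ B)) ∧
    ∀ ⦃u v⦄, G.Adj u v → (u ∈ A ↔ v ∈ B)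

/-- A candidate: a graph with a bipartition `(A,B)`, `|A| ≥ |B| > 0`, every vertex
of `A` of degree at least six, and no `K_6` minor. -/
def IsCandidate {V : Type*} (G : SimpleGraph V) (A B : Set V) : Prop :=
  IsBipartitionWith G A B ∧ B.ncard ≤ A.ncard ∧ B.Nonempty ∧
    (∀ a ∈ A, 6 ≤ (G.neighborSet a).ncard) ∧ ¬ HasCliqueMinor G 6

/-- A minimal candidate: a candidate minimizing `|V(G)| + |E(G)|` among all
(finite) candidates. -/
def IsMinimalCandidate {V : Type*} [Fintype V] (G : SimpleGraph V) (A B : Set V) : Prop :=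
  IsCandidate G A B ∧
    ∀ (n : ℕ) (G' : SimpleGraph (Fin n)) (A' B' : Set (Fin n)),
      IsCandidate G' A' B' →
        Fintype.card V + G.edgeSet.ncard ≤ n + G'.edgeSet.ncard

/-! ### Auxiliary constructions for the reduction -/

set_option linter.unusedSectionVars false
set_option maxHeartbeats 1000000

section Glue

variable {V : Type} {G : SimpleGraph V} {A B : Set V} {b : V}

/-- The vertex type of the glued graph: two copies of `G` identified at `b`
(the second copy omits `b`), plus an apex vertex `none`. -/
abbrev Wg (V : Type) (b : V) : Type := Option (V ⊕ {v : V // v ≠ b})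

def glueRel (G : SimpleGraph V) (A : Set V) (b : V) : Wg V b → Wg V b → Prop
  | some (.inl u), some (.inl v) => G.Adj u v
  | some (.inr u), some (.inr v) => G.Adj u.1 v.1
  | some (.inl u), some (.inr v) => u = b ∧ G.Adj b v.1
  | none, some (.inl a) => a ∈ A
  | none, some (.inr a) => a.1 ∈ A
  | _, _ => False

/-- The glued graph: two copies of `G` identified at `b`, plus an apex joined to
both copies of `A`. -/
def Hg (G : SimpleGraph V) (A : Set V) (b : V) : SimpleGraph (Wg V b) :=
  SimpleGraph.fromRel (glueRel G A b)

lemma adj_ll {u v : V} : (Hg G A b).Adj (some (.inl u)) (some (.inl v)) ↔ G.Adj u v := by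
  simp only [Hg, fromRel_adj, glueRel]
  constructor
  · rintro ⟨-, h | h⟩; exact h; exact h.symm
  · intro h; exact ⟨by simp [h.ne], Or.inl h⟩

lemma adj_rr {u v : {v : V // v ≠ b}} :
    (Hg G A b).Adj (some (.inr u)) (some (.inr v)) ↔ G.Adj u.1 v.1 := by
  simp only [Hg, fromRel_adj, glueRel]
  constructor
  · rintro ⟨-, h | h⟩; exact h; exact h.symm
  · intro h; refine ⟨?_, Or.inl h⟩
    simp only [ne_eq, Option.some.injEq, Sum.inr.injEq]
    intro he; exact h.ne (congrArg Subtype.val he)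

lemma adj_lr {u : V} {v : {v : V // v ≠ b}} :
    (Hg G A b).Adj (some (.inl u)) (some (.inr v)) ↔ (u = b ∧ G.Adj b v.1) := by
  simp only [Hg, fromRel_adj, glueRel]
  constructor
  · rintro ⟨-, h | h⟩; exact h; exact h.elim
  · rintro ⟨rfl, h⟩; exact ⟨by simp, Or.inl ⟨rfl, h⟩⟩

lemma adj_rl {u : V} {v : {v : V // v ≠ b}} :
    (Hg G A b).Adj (some (.inr v)) (some (.inl u)) ↔ (u = b ∧ G.Adj b v.1) := by
  rw [adj_comm]; exact adj_lr

lemma adj_nl {a : V} : (Hg G A b).Adj none (some (.inl a)) ↔ a ∈ A := by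
  simp only [Hg, fromRel_adj, glueRel]
  constructor
  · rintro ⟨-, h | h⟩; exact h; exact h.elim
  · intro h; exact ⟨by simp, Or.inl h⟩

lemma adj_nr {a : {v : V // v ≠ b}} : (Hg G A b).Adj none (some (.inr a)) ↔ a.1 ∈ A := by
  simp only [Hg, fromRel_adj, glueRel]
  constructor
  · rintro ⟨-, h | h⟩; exact h; exact h.elim
  · intro h; exact ⟨by simp, Or.inl h⟩

lemma adj_ln {a : V} : (Hg G A b).Adj (some (.inl a)) none ↔ a ∈ A := by
  rw [adj_comm]; exact adj_nl

lemma adj_rn {a : {v : V // v ≠ b}} : (Hg G A b).Adj (some (.inr a)) none ↔ a.1 ∈ A := by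
  rw [adj_comm]; exact adj_nr

lemma adj_nn : ¬ (Hg G A b).Adj none none := fun h => h.ne rfl

/-- Embedding of the first copy. -/
def ψ (b : V) : V → Wg V b := fun v => some (.inl v)

open Classical in
/-- Embedding of the second copy (sending `b` to the shared copy of `b`). -/
noncomputable def φ (b : V) : V → Wg V b :=
  fun v => if h : v = b then some (.inl b) else some (.inr ⟨v, h⟩)

lemma ψ_def (v : V) : ψ b v = some (.inl v) := rfl

lemma ψ_inj : Injective (ψ (V := V) b) := fun u v h => by simpa [ψ] using h

lemma φ_b : φ b b = some (.inl b) := by rw [φ, dif_pos rfl]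
lemma φ_ne {v : V} (h : v ≠ b) : φ b v = some (.inr ⟨v, h⟩) := by rw [φ, dif_neg h]

lemma φ_inj : Injective (φ (V := V) b) := by
  intro u v h
  by_cases hu : u = b <;> by_cases hv : v = b
  · exact hu.trans hv.symm
  · subst hu; rw [φ_b, φ_ne hv] at h; simp at h
  · subst hv; rw [φ_b, φ_ne hu] at h; simp at h
  · rw [φ_ne hu, φ_ne hv] at h
    simpa using congrArg Subtype.val (Option.some_injective _ h |> Sum.inr_injective)

lemma adj_of_ψ {u v : V} (h : (Hg G A b).Adj (ψ b u) (ψ b v)) : G.Adj u v := adj_ll.1 h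

lemma ψ_adj {u v : V} (h : G.Adj u v) : (Hg G A b).Adj (ψ b u) (ψ b v) := adj_ll.2 h

lemma adj_of_φ {u v : V} (h : (Hg G A b).Adj (φ b u) (φ b v)) : G.Adj u v := by
  by_cases hu : u = b <;> by_cases hv : v = b
  · rw [hu, hv] at h; exact absurd h (Hg G A b).irrefl
  · subst hu; rw [φ_b, φ_ne hv] at h; exact (adj_lr.1 h).2
  · subst hv; rw [φ_b, φ_ne hu] at h; exact ((adj_rl.1 h).2).symm
  · rw [φ_ne hu, φ_ne hv] at h; exact adj_rr.1 h

lemma φ_adj {u v : V} (h : G.Adj u v) : (Hg G A b).Adj (φ b u) (φ b v) := by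
  by_cases hu : u = b <;> by_cases hv : v = b
  · exact absurd (hu.trans hv.symm) h.ne
  · subst hu; rw [φ_b, φ_ne hv]; exact adj_lr.2 ⟨rfl, h⟩
  · subst hv; rw [φ_b, φ_ne hu]; exact adj_rl.2 ⟨rfl, h.symm⟩
  · rw [φ_ne hu, φ_ne hv]; exact adj_rr.2 h

lemma reach_emb {S : Set (Wg V b)} (X : V → Wg V b) (hXinj : Injective X)
    (hXadj : ∀ u v : V, (Hg G A b).Adj (X u) (X v) → G.Adj u v)
    (hS : ∀ x ∈ S, ∃ u, x = X u) :
    ∀ (x y : ↥S) (w : ((Hg G A b).induce S).Walk x y) (u v : ↥(X ⁻¹' S)),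
      x.1 = X u.1 → y.1 = X v.1 → (G.induce (X ⁻¹' S)).Reachable u v := by
  intro x y w
  induction w with
  | nil =>
    intro u v hu hv
    have : u = v := Subtype.ext (hXinj (hu.symm.trans hv))
    rw [this]
  | @cons x' z' y' h p ih =>
    intro u v hu hv
    obtain ⟨u', hu'⟩ := hS z'.1 z'.2
    have hmem : u' ∈ X ⁻¹' S := by rw [Set.mem_preimage, ← hu']; exact z'.2
    have hadj : G.Adj u.1 u' := hXadj _ _ (by rw [← hu, ← hu']; exact h)
    have hstep : (G.induce (X ⁻¹' S)).Adj u ⟨u', hmem⟩ := hadj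
    exact hstep.reachable.trans (ih ⟨u', hmem⟩ v hu' hv)

lemma conn_emb {S : Set (Wg V b)} (X : V → Wg V b) (hXinj : Injective X)
    (hXadj : ∀ u v : V, (Hg G A b).Adj (X u) (X v) → G.Adj u v)
    (hS : ∀ x ∈ S, ∃ u, x = X u) (hconn : ((Hg G A b).induce S).Connected) :
    (G.induce (X ⁻¹' S)).Connected := by
  rw [connected_iff]
  obtain ⟨x⟩ := hconn.nonempty
  obtain ⟨u₀, hu₀⟩ := hS x.1 x.2
  have hu₀m : u₀ ∈ X ⁻¹' S := by rw [Set.mem_preimage, ← hu₀]; exact x.2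
  refine ⟨fun u v => ?_, ⟨⟨u₀, hu₀m⟩⟩⟩
  obtain ⟨w⟩ := hconn.preconnected ⟨X u.1, u.2⟩ ⟨X v.1, v.2⟩
  exact reach_emb X hXinj hXadj hS _ _ w u v rfl rfl

lemma reach_Lb {S : Set (Wg V b)} (hnone : none ∉ S) (hb : b ∈ ψ b ⁻¹' S) :
    ∀ (x y : ↥S) (w : ((Hg G A b).induce S).Walk x y) (u : ↥(ψ b ⁻¹' S)),
      x.1 = ψ b u.1 → y.1 = ψ b b → (G.induce (ψ b ⁻¹' S)).Reachable u ⟨b, hb⟩ := by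
  intro x y w
  induction w with
  | nil =>
    intro u hu hv
    have : u = ⟨b, hb⟩ := Subtype.ext (ψ_inj (hu.symm.trans hv))
    rw [this]
  | @cons x' z' y' h p ih =>
    intro u hu hy
    obtain ⟨zv, hzm⟩ := z'
    match zv with
    | none => exact absurd hzm hnone
    | some (.inl u') =>
      have hh : (Hg G A b).Adj (some (.inl u.1)) (some (.inl u')) := by
        rw [← ψ_def u.1, ← hu]; exact h
      have hadj : G.Adj u.1 u' := adj_ll.1 hh
      have hmem : u' ∈ ψ b ⁻¹' S := by rw [Set.mem_preimage, ψ_def]; exact hzm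
      have hstep : (G.induce (ψ b ⁻¹' S)).Adj u ⟨u', hmem⟩ := hadj
      exact hstep.reachable.trans (ih ⟨u', hmem⟩ (ψ_def u').symm hy)
    | some (.inr v') =>
      have hh : (Hg G A b).Adj (some (.inl u.1)) (some (.inr v')) := by
        rw [← ψ_def u.1, ← hu]; exact h
      have hub : u.1 = b := (adj_lr.1 hh).1
      have : u = ⟨b, hb⟩ := Subtype.ext hub
      rw [this]

lemma reach_Rb {S : Set (Wg V b)} (hnone : none ∉ S) (hb : b ∈ φ b ⁻¹' S) :
    ∀ (x y : ↥S) (w : ((Hg G A b).induce S).Walk x y) (u : ↥(φ b ⁻¹' S)),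
      x.1 = φ b u.1 → y.1 = φ b b → (G.induce (φ b ⁻¹' S)).Reachable u ⟨b, hb⟩ := by
  intro x y w
  induction w with
  | nil =>
    intro u hu hv
    have : u = ⟨b, hb⟩ := Subtype.ext (φ_inj (hu.symm.trans hv))
    rw [this]
  | @cons x' z' y' h p ih =>
    intro u hu hy
    by_cases hub : u.1 = b
    · have : u = ⟨b, hb⟩ := Subtype.ext hub
      rw [this]
    · obtain ⟨zv, hzm⟩ := z'
      match zv with
      | none => exact absurd hzm hnone
      | some (.inl w') =>
        have hh : (Hg G A b).Adj (some (.inr ⟨u.1, hub⟩)) (some (.inl w')) := by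
          rw [← φ_ne hub, ← hu]; exact h
        obtain ⟨hwb, hadj⟩ := adj_rl.1 hh
        have hstep : (G.induce (φ b ⁻¹' S)).Adj u ⟨b, hb⟩ := hadj.symm
        exact hstep.reachable
      | some (.inr v') =>
        have hh : (Hg G A b).Adj (some (.inr ⟨u.1, hub⟩)) (some (.inr v')) := by
          rw [← φ_ne hub, ← hu]; exact h
        have hadj : G.Adj u.1 v'.1 := adj_rr.1 hh
        have hmem : v'.1 ∈ φ b ⁻¹' S := by rw [Set.mem_preimage, φ_ne v'.2]; exact hzm
        have hstep : (G.induce (φ b ⁻¹' S)).Adj u ⟨v'.1, hmem⟩ := hadj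
        exact hstep.reachable.trans (ih ⟨v'.1, hmem⟩ (φ_ne v'.2).symm hy)

lemma conn_Xb {S : Set (Wg V b)} (X : V → Wg V b)
    (hreach : ∀ (hb : b ∈ X ⁻¹' S) (x y : ↥S) (w : ((Hg G A b).induce S).Walk x y)
      (u : ↥(X ⁻¹' S)), x.1 = X u.1 → y.1 = X b → (G.induce (X ⁻¹' S)).Reachable u ⟨b, hb⟩)
    (hb : X b ∈ S) (hconn : ((Hg G A b).induce S).Connected) :
    (G.induce (X ⁻¹' S)).Connected := by
  have hbm : b ∈ X ⁻¹' S := hb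
  rw [connected_iff]
  refine ⟨fun u v => ?_, ⟨⟨b, hbm⟩⟩⟩
  have ru : (G.induce (X ⁻¹' S)).Reachable u ⟨b, hbm⟩ := by
    obtain ⟨w⟩ := hconn.preconnected ⟨X u.1, u.2⟩ ⟨X b, hb⟩
    exact hreach hbm _ _ w u rfl rfl
  have rv : (G.induce (X ⁻¹' S)).Reachable v ⟨b, hbm⟩ := by
    obtain ⟨w⟩ := hconn.preconnected ⟨X v.1, v.2⟩ ⟨X b, hb⟩
    exact hreach hbm _ _ w v rfl rfl
  exact ru.trans rv.symm

lemma stay_L {S : Set (Wg V b)} (hnone : none ∉ S) (hb : some (.inl b) ∉ S) :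
    ∀ (x y : ↥S) (w : ((Hg G A b).induce S).Walk x y) (u : V), x.1 = some (.inl u) →
      ∃ v, y.1 = some (.inl v) := by
  intro x y w
  induction w with
  | nil => intro u hu; exact ⟨u, hu⟩
  | @cons x' z' y' h p ih =>
    intro u hu
    obtain ⟨zv, hzm⟩ := z'
    match zv with
    | none => exact absurd hzm hnone
    | some (.inl u') => exact ih u' rfl
    | some (.inr v') =>
      have hh : (Hg G A b).Adj (some (.inl u)) (some (.inr v')) := by rw [← hu]; exact h
      have hub : u = b := (adj_lr.1 hh).1
      subst hub
      have : some (.inl u) ∈ S := by rw [← hu]; exact x'.2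
      exact absurd this hb

lemma stay_R {S : Set (Wg V b)} (hnone : none ∉ S) (hb : some (.inl b) ∉ S) :
    ∀ (x y : ↥S) (w : ((Hg G A b).induce S).Walk x y) (u : {v : V // v ≠ b}),
      x.1 = some (.inr u) → ∃ v, y.1 = some (.inr v) := by
  intro x y w
  induction w with
  | nil => intro u hu; exact ⟨u, hu⟩
  | @cons x' z' y' h p ih =>
    intro u hu
    obtain ⟨zv, hzm⟩ := z'
    match zv with
    | none => exact absurd hzm hnone
    | some (.inr u') => exact ih u' rfl
    | some (.inl v') =>
      have hh : (Hg G A b).Adj (some (.inr u)) (some (.inl v')) := by rw [← hu]; exact h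
      have hvb : v' = b := (adj_rl.1 hh).1
      subst hvb
      exact absurd hzm hb

lemma dichotomy {S : Set (Wg V b)} (hconn : ((Hg G A b).induce S).Connected)
    (hnone : none ∉ S) (hb : some (.inl b) ∉ S) :
    (∀ x ∈ S, ∃ u, x = some (.inl u)) ∨
      (∀ x ∈ S, ∃ u : {v : V // v ≠ b}, x = some (.inr u)) := by
  obtain ⟨x₀⟩ := hconn.nonempty
  obtain ⟨xv, hxm⟩ := x₀
  match xv with
  | none => exact absurd hxm hnone
  | some (.inl u₀) =>
    left
    intro y hy
    obtain ⟨w⟩ := hconn.preconnected ⟨_, hxm⟩ ⟨y, hy⟩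
    obtain ⟨v, hv⟩ := stay_L hnone hb _ _ w u₀ rfl
    exact ⟨v, hv⟩
  | some (.inr u₀) =>
    right
    intro y hy
    obtain ⟨w⟩ := hconn.preconnected ⟨_, hxm⟩ ⟨y, hy⟩
    obtain ⟨v, hv⟩ := stay_R hnone hb _ _ w u₀ rfl
    exact ⟨v, hv⟩

/-- Extract a `K_5` minor when every branch set lies in the left copy
(except that one may contain the glue vertex). -/
lemma extractL (g : Fin 5 → Set (Wg V b)) (hnone : ∀ j, none ∉ g j)
    (gne : ∀ j, (g j).Nonempty)
    (gconn : ∀ j, ((Hg G A b).induce (g j)).Connected)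
    (gdisj : Pairwise fun i j => Disjoint (g i) (g j))
    (gadj : ∀ i j, i ≠ j → ∃ x ∈ g i, ∃ y ∈ g j, (Hg G A b).Adj x y)
    (hstar : ∀ j, some (.inl b) ∈ g j ∨ ∀ x ∈ g j, ∃ u, x = some (.inl u)) :
    HasCliqueMinor G 5 := by
  have key : ∀ i j, i ≠ j → ∀ x y, x ∈ g i → y ∈ g j → (Hg G A b).Adj x y →
      ∃ u, x = ψ b u := by
    intro i j hij x y hx hy hxy
    match x with
    | none => exact absurd hx (hnone i)
    | some (.inl u) => exact ⟨u, rfl⟩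
    | some (.inr u) =>
      rcases hstar i with hbi | hfi
      · match y with
        | none => exact absurd hy (hnone j)
        | some (.inl v) =>
          have hvb : v = b := (adj_rl.1 hxy).1
          subst hvb
          exact absurd (Set.disjoint_left.1 (gdisj hij) hbi hy) (fun h => h)
        | some (.inr v) =>
          rcases hstar j with hbj | hfj
          · exact absurd (Set.disjoint_left.1 (gdisj hij) hbi hbj) (fun h => h)
          · obtain ⟨u', hu'⟩ := hfj _ hy
            simp at hu'
      · obtain ⟨u', hu'⟩ := hfi _ hx
        simp at hu'
  refine ⟨fun j => ψ b ⁻¹' g j, fun j => ?_, fun j => ?_,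
    fun i j hij => Disjoint.preimage _ (gdisj hij), fun i j hij => ?_⟩
  · rcases hstar j with h | h
    · exact ⟨b, h⟩
    · obtain ⟨x, hx⟩ := gne j
      obtain ⟨u, rfl⟩ := h x hx
      exact ⟨u, hx⟩
  · rcases hstar j with h | h
    · exact conn_Xb (ψ b) (fun hb => reach_Lb (hnone j) hb) h (gconn j)
    · refine conn_emb (ψ b) ψ_inj (fun u v => adj_of_ψ) ?_ (gconn j)
      intro x hx
      obtain ⟨u, rfl⟩ := h x hx
      exact ⟨u, rfl⟩
  · obtain ⟨x, hx, y, hy, hxy⟩ := gadj i j hij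
    obtain ⟨u, rfl⟩ := key i j hij x y hx hy hxy
    obtain ⟨v, rfl⟩ := key j i hij.symm y (ψ b u) hy hx hxy.symm
    exact ⟨u, hx, v, hy, adj_of_ψ hxy⟩

/-- Extract a `K_5` minor when every branch set lies in the right copy
(except that one may contain the glue vertex). -/
lemma extractR (g : Fin 5 → Set (Wg V b)) (hnone : ∀ j, none ∉ g j)
    (gne : ∀ j, (g j).Nonempty)
    (gconn : ∀ j, ((Hg G A b).induce (g j)).Connected)
    (gdisj : Pairwise fun i j => Disjoint (g i) (g j))
    (gadj : ∀ i j, i ≠ j → ∃ x ∈ g i, ∃ y ∈ g j, (Hg G A b).Adj x y)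
    (hstar : ∀ j, some (.inl b) ∈ g j ∨
      ∀ x ∈ g j, ∃ u : {v : V // v ≠ b}, x = some (.inr u)) :
    HasCliqueMinor G 5 := by
  have key : ∀ i j, i ≠ j → ∀ x y, x ∈ g i → y ∈ g j → (Hg G A b).Adj x y →
      ∃ u, x = φ b u := by
    intro i j hij x y hx hy hxy
    match x with
    | none => exact absurd hx (hnone i)
    | some (.inr u) => exact ⟨u.1, by rw [φ_ne u.2]⟩
    | some (.inl v) =>
      by_cases hvb : v = b
      · exact ⟨b, by rw [φ_b, hvb]⟩
      · rcases hstar i with hbi | hfi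
        · match y with
          | none => exact absurd hy (hnone j)
          | some (.inr w) =>
            exact absurd (adj_lr.1 hxy).1 hvb
          | some (.inl w) =>
            rcases hstar j with hbj | hfj
            · exact absurd (Set.disjoint_left.1 (gdisj hij) hbi hbj) (fun h => h)
            · obtain ⟨u', hu'⟩ := hfj _ hy
              simp at hu'
        · obtain ⟨u', hu'⟩ := hfi _ hx
          simp at hu'
  refine ⟨fun j => φ b ⁻¹' g j, fun j => ?_, fun j => ?_,
    fun i j hij => Disjoint.preimage _ (gdisj hij), fun i j hij => ?_⟩
  · rcases hstar j with h | h
    · exact ⟨b, by rw [Set.mem_preimage, φ_b]; exact h⟩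
    · obtain ⟨x, hx⟩ := gne j
      obtain ⟨u, rfl⟩ := h x hx
      exact ⟨u.1, by rw [Set.mem_preimage, φ_ne u.2]; exact hx⟩
  · rcases hstar j with h | h
    · exact conn_Xb (φ b) (fun hb => reach_Rb (hnone j) hb)
        (by rw [φ_b]; exact h) (gconn j)
    · refine conn_emb (φ b) φ_inj (fun u v => adj_of_φ) ?_ (gconn j)
      intro x hx
      obtain ⟨u, rfl⟩ := h x hx
      exact ⟨u.1, by rw [φ_ne u.2]⟩
  · obtain ⟨x, hx, y, hy, hxy⟩ := gadj i j hij
    obtain ⟨u, rfl⟩ := key i j hij x y hx hy hxy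
    obtain ⟨v, rfl⟩ := key j i hij.symm y (φ b u) hy hx hxy.symm
    exact ⟨u, hx, v, hy, adj_of_φ hxy⟩

lemma mem_ψ_img {X : Set V} {v : V} : some (.inl v) ∈ ψ b '' X ↔ v ∈ X := by
  constructor
  · rintro ⟨a, ha, he⟩
    rw [ψ_def] at he
    obtain rfl : a = v := by simpa using he
    exact ha
  · intro h; exact ⟨v, h, ψ_def v⟩

lemma inr_not_ψ_img {X : Set V} {v : {v : V // v ≠ b}} : some (.inr v) ∉ ψ b '' X := by
  rintro ⟨a, ha, he⟩; rw [ψ_def] at he; simp at he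

lemma none_not_ψ_img {X : Set V} : (none : Wg V b) ∉ ψ b '' X := by
  rintro ⟨a, ha, he⟩; rw [ψ_def] at he; simp at he

lemma mem_φ_img_l {X : Set V} {v : V} : some (.inl v) ∈ φ b '' X ↔ (v = b ∧ b ∈ X) := by
  constructor
  · rintro ⟨a, ha, he⟩
    by_cases hab : a = b
    · rw [hab] at he ha; rw [φ_b] at he
      obtain hv : b = v := by simpa using he
      exact ⟨hv.symm, ha⟩
    · rw [φ_ne hab] at he; simp at he
  · rintro ⟨hv, h⟩; exact ⟨b, h, by rw [φ_b, hv]⟩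

lemma mem_φ_img_r {X : Set V} {v : {v : V // v ≠ b}} : some (.inr v) ∈ φ b '' X ↔ v.1 ∈ X := by
  constructor
  · rintro ⟨a, ha, he⟩
    by_cases hab : a = b
    · rw [hab, φ_b] at he; simp at he
    · rw [φ_ne hab] at he
      obtain he' : a = v.1 := by simpa using congrArg Subtype.val (Option.some_injective _ he |> Sum.inr_injective)
      rw [← he']; exact ha
  · intro h; exact ⟨v.1, h, by rw [φ_ne v.2]⟩

lemma none_not_φ_img {X : Set V} : (none : Wg V b) ∉ φ b '' X := by
  rintro ⟨a, ha, he⟩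
  by_cases hab : a = b
  · rw [hab, φ_b] at he; simp at he
  · rw [φ_ne hab] at he; simp at he

lemma deg_ge [Fintype V] (X : V → Wg V b) (hXinj : Injective X) {a : V}
    (h0 : ∀ v, X v ≠ none)
    (h1 : ∀ v, G.Adj a v → (Hg G A b).Adj (X a) (X v))
    (h2 : (Hg G A b).Adj (X a) none)
    (hdeg : 5 ≤ (G.neighborSet a).ncard) :
    6 ≤ ((Hg G A b).neighborSet (X a)).ncard := by
  classical
  have hsub : insert none (X '' G.neighborSet a) ⊆ (Hg G A b).neighborSet (X a) := by
    intro w hw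
    rcases Set.mem_insert_iff.1 hw with rfl | ⟨v, hv, rfl⟩
    · exact h2
    · exact h1 v hv
  have hn : (none : Wg V b) ∉ X '' G.neighborSet a := by
    rintro ⟨v, hv, he⟩; exact h0 v he
  calc 6 ≤ (G.neighborSet a).ncard + 1 := by omega
    _ = (insert none (X '' G.neighborSet a)).ncard := by
        rw [Set.ncard_insert_of_notMem hn (Set.toFinite _),
          Set.ncard_image_of_injective _ hXinj]
    _ ≤ ((Hg G A b).neighborSet (X a)).ncard :=
        Set.ncard_le_ncard hsub (Set.toFinite _)

end Glue

/-- If every bipartite graph with bipartition `(A,B)`, `|A| ≥ |B| > 0` and every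
vertex of `A` of degree at least six has a `K_6` minor, then every bipartite graph
with bipartition `(A,B)`, `|A| ≥ |B| > 0` and every vertex of `A` of degree at least
five has a `K_5` minor. -/
theorem k6_implies_k5 :
    (∀ (V : Type) (_ : Fintype V) (G : SimpleGraph V) (A B : Set V),
        IsBipartitionWith G A B → B.ncard ≤ A.ncard → B.Nonempty →
          (∀ a ∈ A, 6 ≤ (G.neighborSet a).ncard) → HasCliqueMinor G 6) →
    ∀ (V : Type) (_ : Fintype V) (G : SimpleGraph V) (A B : Set V),
        IsBipartitionWith G A B → B.ncard ≤ A.ncard → B.Nonempty →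
          (∀ a ∈ A, 5 ≤ (G.neighborSet a).ncard) → HasCliqueMinor G 5 := by
  intro hyp V _fV G A B hbip hcard hBne hdeg
  classical
  obtain ⟨b, hbB⟩ := hBne
  obtain ⟨hcover, hABdisj, hrule⟩ := hbip
  have hbA : b ∉ A := fun h => hABdisj b ⟨h, hbB⟩
  set H : SimpleGraph (Wg V b) := Hg G A b with hH
  set A' : Set (Wg V b) := ψ b '' A ∪ φ b '' A with hA'
  set B' : Set (Wg V b) := ψ b '' B ∪ φ b '' (B \ {b}) ∪ {none} with hB'
  -- membership characterizations
  have memA'l : ∀ v : V, some (.inl v) ∈ A' ↔ v ∈ A := by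
    intro v
    rw [hA', Set.mem_union, mem_ψ_img, mem_φ_img_l]
    constructor
    · rintro (h | ⟨rfl, h⟩); exact h; exact absurd h hbA
    · exact Or.inl
  have memA'r : ∀ v : {v : V // v ≠ b}, some (.inr v) ∈ A' ↔ v.1 ∈ A := by
    intro v
    rw [hA', Set.mem_union, mem_φ_img_r]
    constructor
    · rintro (h | h); exact absurd h inr_not_ψ_img; exact h
    · exact Or.inr
  have memA'n : (none : Wg V b) ∉ A' := by
    rw [hA']
    rintro (h | h)
    · exact none_not_ψ_img h
    · exact none_not_φ_img h
  have memB'l : ∀ v : V, some (.inl v) ∈ B' ↔ v ∈ B := by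
    intro v
    rw [hB', Set.mem_union, Set.mem_union, mem_ψ_img, mem_φ_img_l]
    constructor
    · rintro ((h | ⟨rfl, h⟩) | h)
      · exact h
      · exact absurd h.2 (by simp)
      · simp at h
    · exact fun h => Or.inl (Or.inl h)
  have memB'r : ∀ v : {v : V // v ≠ b}, some (.inr v) ∈ B' ↔ v.1 ∈ B := by
    intro v
    rw [hB', Set.mem_union, Set.mem_union, mem_φ_img_r]
    constructor
    · rintro ((h | h) | h)
      · exact absurd h inr_not_ψ_img
      · exact h.1
      · simp at h
    · exact fun h => Or.inl (Or.inr ⟨h, v.2⟩)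
  have memB'n : (none : Wg V b) ∈ B' := Or.inr rfl
  -- bipartition
  have hbip' : IsBipartitionWith H A' B' := by
    refine ⟨?_, ?_, ?_⟩
    · intro w
      match w with
      | none => exact Or.inr memB'n
      | some (.inl v) =>
        rcases hcover v with h | h
        · exact Or.inl ((memA'l v).2 h)
        · exact Or.inr ((memB'l v).2 h)
      | some (.inr v) =>
        rcases hcover v.1 with h | h
        · exact Or.inl ((memA'r v).2 h)
        · exact Or.inr ((memB'r v).2 h)
    · rintro w ⟨h1, h2⟩
      match w with
      | none => exact memA'n h1
      | some (.inl v) => exact hABdisj v ⟨(memA'l v).1 h1, (memB'l v).1 h2⟩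
      | some (.inr v) => exact hABdisj v.1 ⟨(memA'r v).1 h1, (memB'r v).1 h2⟩
    · intro x y hxy
      match x, y with
      | none, none => exact absurd hxy adj_nn
      | none, some (.inl v) =>
        have hv : v ∈ A := adj_nl.1 hxy
        refine iff_of_false memA'n ?_
        rw [memB'l]
        exact fun h => hABdisj v ⟨hv, h⟩
      | none, some (.inr v) =>
        have hv : v.1 ∈ A := adj_nr.1 hxy
        refine iff_of_false memA'n ?_
        rw [memB'r]
        exact fun h => hABdisj v.1 ⟨hv, h⟩
      | some (.inl v), none => exact iff_of_true ((memA'l v).2 (adj_ln.1 hxy)) memB'n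
      | some (.inr v), none => exact iff_of_true ((memA'r v).2 (adj_rn.1 hxy)) memB'n
      | some (.inl u), some (.inl v) =>
        rw [memA'l, memB'l]; exact hrule (adj_ll.1 hxy)
      | some (.inr u), some (.inr v) =>
        rw [memA'r, memB'r]; exact hrule (adj_rr.1 hxy)
      | some (.inl u), some (.inr v) =>
        obtain ⟨hub, hadj⟩ := adj_lr.1 hxy
        rw [memA'l, memB'r, hub]
        exact hrule hadj
      | some (.inr v), some (.inl u) =>
        obtain ⟨hub, hadj⟩ := adj_rl.1 hxy
        rw [memA'r, memB'l, hub]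
        exact hrule hadj.symm
  -- cardinalities
  have hdisj1 : Disjoint (ψ b '' A) (φ b '' A) := by
    rw [Set.disjoint_left]
    rintro w ⟨a, ha, rfl⟩ hw
    exact hbA ((mem_φ_img_l.1 hw).2)
  have hdisj2 : Disjoint (ψ b '' B) (φ b '' (B \ {b})) := by
    rw [Set.disjoint_left]
    rintro w ⟨a, ha, rfl⟩ hw
    exact (mem_φ_img_l.1 hw).2.2 rfl
  have hdisj3 : Disjoint (ψ b '' B ∪ φ b '' (B \ {b})) {(none : Wg V b)} := by
    rw [Set.disjoint_right]
    rintro w rfl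
    rintro (h | h)
    · exact none_not_ψ_img h
    · exact none_not_φ_img h
  have hcardA' : A'.ncard = A.ncard + A.ncard := by
    rw [hA', Set.ncard_union_eq hdisj1 (Set.toFinite _) (Set.toFinite _),
      Set.ncard_image_of_injective _ ψ_inj, Set.ncard_image_of_injective _ φ_inj]
  have hcardB' : B'.ncard = B.ncard + (B.ncard - 1) + 1 := by
    rw [hB', Set.ncard_union_eq hdisj3 (Set.toFinite _) (Set.toFinite _),
      Set.ncard_union_eq hdisj2 (Set.toFinite _) (Set.toFinite _),
      Set.ncard_image_of_injective _ ψ_inj, Set.ncard_image_of_injective _ φ_inj,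
      Set.ncard_diff_singleton_of_mem hbB, Set.ncard_singleton]
  have hBpos : 0 < B.ncard := (Set.ncard_pos (Set.toFinite _)).2 ⟨b, hbB⟩
  have hcard' : B'.ncard ≤ A'.ncard := by
    rw [hcardA', hcardB']; omega
  have hne' : B'.Nonempty := ⟨none, memB'n⟩
  -- degrees
  have hdeg' : ∀ a' ∈ A', 6 ≤ (H.neighborSet a').ncard := by
    intro a' ha'
    rw [hA'] at ha'
    rcases ha' with ⟨a, ha, rfl⟩ | ⟨a, ha, rfl⟩
    · refine deg_ge (ψ b) ψ_inj (fun v => by rw [ψ_def]; simp) (fun v h => ψ_adj h)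
        ?_ (hdeg a ha)
      rw [ψ_def]; exact adj_ln.2 ha
    · have hab : a ≠ b := fun h => hbA (h ▸ ha)
      refine deg_ge (φ b) φ_inj (fun v => ?_) (fun v h => φ_adj h) ?_ (hdeg a ha)
      · by_cases hvb : v = b
        · rw [hvb, φ_b]; simp
        · rw [φ_ne hvb]; simp
      · rw [φ_ne hab]; exact adj_rn.2 ha
  -- apply the K₆ hypothesis
  obtain ⟨f, hfne, hfconn, hfdisj, hfadj⟩ :=
    hyp (Wg V b) inferInstance H A' B' hbip' hcard' hne' hdeg'
  -- choose five branch sets avoiding the apex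
  have hex : ∃ e : Fin 5 → Fin 6, Injective e ∧ ∀ j, (none : Wg V b) ∉ f (e j) := by
    by_cases hn : ∃ i, (none : Wg V b) ∈ f i
    · obtain ⟨i₀, hi₀⟩ := hn
      exact ⟨i₀.succAbove, Fin.succAbove_right_injective, fun j hj =>
        Set.disjoint_left.1 (hfdisj (Fin.succAbove_ne i₀ j)) hj hi₀⟩
    · exact ⟨Fin.castLE (by norm_num), Fin.castLE_injective _, fun j hj => hn ⟨_, hj⟩⟩
  obtain ⟨e, einj, hgnone⟩ := hex
  set g : Fin 5 → Set (Wg V b) := fun j => f (e j) with hg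
  have gne : ∀ j, (g j).Nonempty := fun j => hfne _
  have gconn : ∀ j, (H.induce (g j)).Connected := fun j => hfconn _
  have gdisj : Pairwise fun i j => Disjoint (g i) (g j) := fun i j hij => hfdisj (einj.ne hij)
  have gadj : ∀ i j, i ≠ j → ∃ x ∈ g i, ∃ y ∈ g j, H.Adj x y :=
    fun i j hij => hfadj _ _ (einj.ne hij)
  have hboth : ∀ j, (∀ x ∈ g j, ∃ u, x = some (.inl u)) →
      (∀ x ∈ g j, ∃ u : {v : V // v ≠ b}, x = some (.inr u)) → False := by
    intro j hL hR
    obtain ⟨x, hx⟩ := gne j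
    obtain ⟨u, rfl⟩ := hL x hx
    obtain ⟨v, hv⟩ := hR _ hx
    simp at hv
  have hcross : ∀ i j, i ≠ j → some (.inl b) ∉ g i →
      (∀ x ∈ g i, ∃ u, x = some (.inl u)) →
      (∀ x ∈ g j, ∃ u : {v : V // v ≠ b}, x = some (.inr u)) → False := by
    intro i j hij hbi hL hR
    obtain ⟨x, hx, y, hy, hxy⟩ := gadj i j hij
    obtain ⟨u, rfl⟩ := hL x hx
    obtain ⟨v, rfl⟩ := hR y hy
    have hub := (adj_lr.1 hxy).1
    exact hbi (hub ▸ hx)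
  by_cases hstar : ∃ j₀, some (.inl b) ∈ g j₀
  · obtain ⟨j₀, hj₀⟩ := hstar
    have hother : ∀ j, j ≠ j₀ → some (.inl b) ∉ g j := fun j hj hmem =>
      Set.disjoint_left.1 (gdisj hj) hmem hj₀
    have hdich : ∀ j, j ≠ j₀ → (∀ x ∈ g j, ∃ u, x = some (.inl u)) ∨
        (∀ x ∈ g j, ∃ u : {v : V // v ≠ b}, x = some (.inr u)) :=
      fun j hj => dichotomy (gconn j) (hgnone _) (hother j hj)
    obtain ⟨j₁, hj₁⟩ := exists_ne j₀
    rcases hdich j₁ hj₁ with hL1 | hR1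
    · have hallL : ∀ j, j ≠ j₀ → ∀ x ∈ g j, ∃ u, x = some (.inl u) := by
        intro j hj
        rcases hdich j hj with h | h
        · exact h
        · exfalso
          by_cases hjj : j = j₁
          · exact hboth j₁ hL1 (hjj ▸ h)
          · exact hcross j₁ j (fun hh => hjj hh.symm) (hother j₁ hj₁) hL1 h
      refine extractL g hgnone gne gconn gdisj gadj (fun j => ?_)
      by_cases hj : j = j₀
      · exact Or.inl (hj ▸ hj₀)
      · exact Or.inr (hallL j hj)
    · have hallR : ∀ j, j ≠ j₀ → ∀ x ∈ g j, ∃ u : {v : V // v ≠ b}, x = some (.inr u) := by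
        intro j hj
        rcases hdich j hj with h | h
        · exfalso
          by_cases hjj : j = j₁
          · exact hboth j₁ (hjj ▸ h) hR1
          · exact hcross j j₁ hjj (hother j hj) h hR1
        · exact h
      refine extractR g hgnone gne gconn gdisj gadj (fun j => ?_)
      by_cases hj : j = j₀
      · exact Or.inl (hj ▸ hj₀)
      · exact Or.inr (hallR j hj)
  · push_neg at hstar
    have hdich : ∀ j, (∀ x ∈ g j, ∃ u, x = some (.inl u)) ∨
        (∀ x ∈ g j, ∃ u : {v : V // v ≠ b}, x = some (.inr u)) :=
      fun j => dichotomy (gconn j) (hgnone _) (hstar j)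
    rcases hdich 0 with hL1 | hR1
    · have hallL : ∀ j, ∀ x ∈ g j, ∃ u, x = some (.inl u) := by
        intro j
        rcases hdich j with h | h
        · exact h
        · exfalso
          by_cases hjj : j = 0
          · exact hboth 0 hL1 (hjj ▸ h)
          · exact hcross 0 j (fun hh => hjj hh.symm) (hstar 0) hL1 h
      exact extractL g hgnone gne gconn gdisj gadj (fun j => Or.inr (hallL j))
    · have hallR : ∀ j, ∀ x ∈ g j, ∃ u : {v : V // v ≠ b}, x = some (.inr u) := by
        intro j
        rcases hdich j with h | h
        · exfalso
          by_cases hjj : j = 0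
          · exact hboth 0 (hjj ▸ h) hR1
          · exact hcross j 0 hjj (hstar j) h hR1
        · exact h
      exact extractR g hgnone gne gconn gdisj gadj (fun j => Or.inr (hallR j))
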